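/- Let 0<p<1 and let {P_1,...,P_n} ⊆ R^n be linearly independent and Q ∈ R^n. If M belongs to the p-convex hull of {P_1,...,P_n, Q, 0}, then there exist n points P_{i_1},...,P_{i_n} among {P_1,...,P_n,Q} such that M belongs to the p-convex hull of {P_{i_1},...,P_{i_n}, 0}. -/

import Mathlib

open Finset

def PConvex {X : Type*} [AddCommGroup X] [Module ℝ X] (p : ℝ) (S : Set X) : Prop :=
  ∀ x ∈ S, ∀ y ∈ S, ∀ a b : ℝ, 0 ≤ a → 0 ≤ b → a ^ p + b ^ p = 1 → a • x + b • y ∈ S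

def pConvHull {X : Type*} [AddCommGroup X] [Module ℝ X] (p : ℝ) (A : Set X) : Set X :=
  ⋂₀ {S : Set X | PConvex p S ∧ A ⊆ S}

/-- Subadditivity of `x ↦ x ^ p` for `0 < p ≤ 1`. -/
lemma rpow_subadd {p : ℝ} (hp0 : 0 < p) (hp1 : p < 1) {x y : ℝ} (hx : 0 ≤ x) (hy : 0 ≤ y) :
    (x + y) ^ p ≤ x ^ p + y ^ p := by
  have h := NNReal.rpow_add_le_add_rpow x.toNNReal y.toNNReal hp0.le hp1.le
  have hc : ((x.toNNReal + y.toNNReal : NNReal) : ℝ) = x + y := by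
    simp [Real.coe_toNNReal _ hx, Real.coe_toNNReal _ hy]
  calc (x + y) ^ p = ((x.toNNReal + y.toNNReal : NNReal) : ℝ) ^ p := by rw [hc]
    _ = (((x.toNNReal + y.toNNReal) ^ p : NNReal) : ℝ) := by rw [NNReal.coe_rpow]
    _ ≤ ((x.toNNReal ^ p + y.toNNReal ^ p : NNReal) : ℝ) := by exact_mod_cast h
    _ = x ^ p + y ^ p := by
        push_cast [NNReal.coe_rpow, Real.coe_toNNReal _ hx, Real.coe_toNNReal _ hy]; ring

lemma rpow_one_div_rpow {p : ℝ} (hp0 : 0 < p) {x : ℝ} (hx : 0 ≤ x) :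
    (x ^ (1 / p)) ^ p = x := by
  rw [one_div, Real.rpow_inv_rpow hx hp0.ne']

lemma le_one_of_rpow_le_one {p : ℝ} (hp0 : 0 < p) {x : ℝ} (hx : 0 ≤ x) (h : x ^ p ≤ 1) :
    x ≤ 1 := by
  by_contra hc
  push_neg at hc
  have : 1 < x ^ p := (Real.one_lt_rpow_iff_of_pos (by linarith)).2 (Or.inl ⟨hc, hp0⟩)
  linarith

/-- Any p-convex combination of elements of a p-convex set containing `0` lies in the set. -/
lemma sum_mem_of_pconvex {X : Type*} [AddCommGroup X] [Module ℝ X]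
    {p : ℝ} (hp0 : 0 < p) (hp1 : p < 1) {S : Set X} (hS : PConvex p S) (h0 : (0 : X) ∈ S) :
    ∀ (m : ℕ) (v : Fin m → X), (∀ i, v i ∈ S) → ∀ lam : Fin m → ℝ,
      (∀ i, 0 ≤ lam i) → (∑ i, lam i ^ p) ≤ 1 → (∑ i, lam i • v i) ∈ S := by
  intro m
  induction m with
  | zero => intro v hv lam hlam hsum; simpa using h0
  | succ m ih =>
    intro v hv lam hlam hsum
    rw [Fin.sum_univ_castSucc]
    set T : ℝ := ∑ i : Fin m, lam i.castSucc ^ p with hT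
    have hTnonneg : 0 ≤ T :=
      Finset.sum_nonneg fun i _ => Real.rpow_nonneg (hlam _) p
    have hsum' : T + lam (Fin.last m) ^ p ≤ 1 := by
      rw [Fin.sum_univ_castSucc] at hsum; exact hsum
    have hμ : 0 ≤ lam (Fin.last m) := hlam _
    have hμp : 0 ≤ lam (Fin.last m) ^ p := Real.rpow_nonneg hμ p
    rcases eq_or_lt_of_le hTnonneg with hT0 | hTpos
    · -- all earlier coefficients vanish
      have hzero : ∀ i : Fin m, lam i.castSucc = 0 := by
        intro i
        have h1 : lam i.castSucc ^ p = 0 := by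
          have := (Finset.sum_eq_zero_iff_of_nonneg
            (fun j (_ : j ∈ Finset.univ) => Real.rpow_nonneg (hlam j.castSucc) p)).1 hT0.symm
          exact this i (Finset.mem_univ i)
        have := Real.rpow_eq_zero_iff_of_nonneg (hlam i.castSucc) |>.1 h1
        exact this.1
      have hzsum : (∑ i : Fin m, lam i.castSucc • v i.castSucc) = 0 := by
        apply Finset.sum_eq_zero; intro i _; rw [hzero i, zero_smul]
      rw [hzsum, zero_add]
      set b : ℝ := (1 - lam (Fin.last m) ^ p) ^ (1 / p) with hb
      have hb0 : 0 ≤ b := Real.rpow_nonneg (by linarith) _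
      have hbp : b ^ p = 1 - lam (Fin.last m) ^ p := rpow_one_div_rpow hp0 (by linarith)
      have := hS (v (Fin.last m)) (hv _) 0 h0 (lam (Fin.last m)) b hμ hb0 (by rw [hbp]; ring)
      simpa using this
    · -- normalize the first part
      set s : ℝ := T ^ (1 / p) with hs
      have hspos : 0 < s := Real.rpow_pos_of_pos hTpos _
      have hsp : s ^ p = T := rpow_one_div_rpow hp0 hTpos.le
      have hy : (∑ i : Fin m, (lam i.castSucc / s) • v i.castSucc) ∈ S := by
        apply ih (fun i => v i.castSucc) (fun i => hv _) (fun i => lam i.castSucc / s)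
          (fun i => div_nonneg (hlam _) hspos.le)
        have : (∑ i : Fin m, (lam i.castSucc / s) ^ p) = T / s ^ p := by
          rw [Finset.sum_div]
          apply Finset.sum_congr rfl
          intro i _
          rw [Real.div_rpow (hlam _) hspos.le]
        rw [this, hsp, div_self hTpos.ne']
      set y : X := ∑ i : Fin m, (lam i.castSucc / s) • v i.castSucc with hydef
      have hsy : s • y = ∑ i : Fin m, lam i.castSucc • v i.castSucc := by
        rw [hydef, Finset.smul_sum]
        apply Finset.sum_congr rfl
        intro i _
        rw [smul_smul, mul_div_cancel₀ _ hspos.ne']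
      set c : ℝ := (T + lam (Fin.last m) ^ p) ^ (1 / p) with hcdef
      have hcpos : 0 < c := Real.rpow_pos_of_pos (by linarith) _
      have hcp : c ^ p = T + lam (Fin.last m) ^ p := rpow_one_div_rpow hp0 (by linarith)
      have hz : ((s / c) • y + (lam (Fin.last m) / c) • v (Fin.last m)) ∈ S := by
        apply hS y hy (v (Fin.last m)) (hv _) (s / c) (lam (Fin.last m) / c)
          (div_nonneg hspos.le hcpos.le) (div_nonneg hμ hcpos.le)
        rw [Real.div_rpow hspos.le hcpos.le, Real.div_rpow hμ hcpos.le, hsp, hcp,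
          ← add_div, div_self (by positivity)]
      set z : X := (s / c) • y + (lam (Fin.last m) / c) • v (Fin.last m) with hzdef
      set b : ℝ := (1 - c ^ p) ^ (1 / p) with hb
      have hb0 : 0 ≤ b := Real.rpow_nonneg (by rw [hcp]; linarith) _
      have hbp : b ^ p = 1 - c ^ p := rpow_one_div_rpow hp0 (by rw [hcp]; linarith)
      have hfin := hS z hz 0 h0 c b hcpos.le hb0 (by rw [hbp]; ring)
      have hcz : c • z = s • y + lam (Fin.last m) • v (Fin.last m) := by
        rw [hzdef, smul_add, smul_smul, smul_smul, mul_div_cancel₀ _ hcpos.ne',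
          mul_div_cancel₀ _ hcpos.ne']
      rw [smul_zero, add_zero, hcz, hsy] at hfin
      exact hfin

/-- Membership in the p-convex hull of a finite family together with `0` gives a representation. -/
lemma repr_of_mem_hull {X : Type*} [AddCommGroup X] [Module ℝ X]
    {p : ℝ} (hp0 : 0 < p) (hp1 : p < 1) {m : ℕ} (v : Fin m → X) {M : X}
    (hM : M ∈ pConvHull p (Set.range v ∪ {0})) :
    ∃ lam : Fin m → ℝ, (∀ i, 0 ≤ lam i) ∧ (∑ i, lam i ^ p) ≤ 1 ∧ M = ∑ i, lam i • v i := by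
  set T : Set X :=
    {x | ∃ lam : Fin m → ℝ, (∀ i, 0 ≤ lam i) ∧ (∑ i, lam i ^ p) ≤ 1 ∧ x = ∑ i, lam i • v i}
    with hTdef
  have hTconv : PConvex p T := by
    intro x hx y hy a b ha hb hab
    obtain ⟨lx, hlx0, hlxs, hlxe⟩ := hx
    obtain ⟨ly, hly0, hlys, hlye⟩ := hy
    refine ⟨fun i => a * lx i + b * ly i,
      fun i => add_nonneg (mul_nonneg ha (hlx0 i)) (mul_nonneg hb (hly0 i)), ?_, ?_⟩
    · calc (∑ i, (a * lx i + b * ly i) ^ p)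
          ≤ ∑ i, ((a * lx i) ^ p + (b * ly i) ^ p) := by
            apply Finset.sum_le_sum
            intro i _
            exact rpow_subadd hp0 hp1 (mul_nonneg ha (hlx0 i)) (mul_nonneg hb (hly0 i))
        _ = ∑ i, (a ^ p * lx i ^ p + b ^ p * ly i ^ p) := by
            apply Finset.sum_congr rfl
            intro i _
            rw [Real.mul_rpow ha (hlx0 i), Real.mul_rpow hb (hly0 i)]
        _ = a ^ p * (∑ i, lx i ^ p) + b ^ p * (∑ i, ly i ^ p) := by
            rw [Finset.sum_add_distrib, Finset.mul_sum, Finset.mul_sum]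
        _ ≤ a ^ p * 1 + b ^ p * 1 := by
            have h1 := mul_le_mul_of_nonneg_left hlxs (Real.rpow_nonneg ha p)
            have h2 := mul_le_mul_of_nonneg_left hlys (Real.rpow_nonneg hb p)
            linarith
        _ = 1 := by rw [mul_one, mul_one, hab]
    · rw [hlxe, hlye, Finset.smul_sum, Finset.smul_sum, ← Finset.sum_add_distrib]
      apply Finset.sum_congr rfl
      intro i _
      rw [add_smul, smul_smul, smul_smul]
  have hTsub : Set.range v ∪ {0} ⊆ T := by
    rintro x (⟨i, rfl⟩ | hx)
    · refine ⟨fun j => if j = i then 1 else 0,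
        fun j => by by_cases h : j = i <;> simp [h], ?_, ?_⟩
      · simp [apply_ite (fun x : ℝ => x ^ p), Real.zero_rpow hp0.ne',
          Finset.sum_ite_eq' Finset.univ i]
      · simp [ite_smul, Finset.sum_ite_eq' Finset.univ i]
    · rcases hx with rfl
      exact ⟨fun _ => 0, fun _ => le_refl 0, by simp [Real.zero_rpow hp0.ne'], by simp⟩
  exact hM T ⟨hTconv, hTsub⟩

/-- Concavity of `x ↦ x^p` gives: the value at `0` dominates the min of the values at two
endpoints of an interval containing `0`, for sums of compositions with affine maps. -/
lemma min_endpoints_le {p : ℝ} (hp0 : 0 < p) (hp1 : p < 1) {m : ℕ} (c k : Fin m → ℝ)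
    {t₁ t₂ : ℝ} (hlt : t₁ < t₂) (h1 : t₁ ≤ 0) (h2 : 0 ≤ t₂)
    (hn1 : ∀ i, 0 ≤ c i + t₁ * k i) (hn2 : ∀ i, 0 ≤ c i + t₂ * k i) :
    min (∑ i, (c i + t₁ * k i) ^ p) (∑ i, (c i + t₂ * k i) ^ p) ≤ ∑ i, c i ^ p := by
  set a : ℝ := t₂ / (t₂ - t₁) with ha
  set b : ℝ := -t₁ / (t₂ - t₁) with hb
  have hden : 0 < t₂ - t₁ := by linarith
  have ha0 : 0 ≤ a := div_nonneg h2 hden.le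
  have hb0 : 0 ≤ b := div_nonneg (by linarith) hden.le
  have hab : a + b = 1 := by
    rw [ha, hb]
    field_simp
    ring
  have hcomb : ∀ i : Fin m,
      a * (c i + t₁ * k i) ^ p + b * (c i + t₂ * k i) ^ p ≤ c i ^ p := by
    intro i
    have hkey := (Real.concaveOn_rpow hp0.le hp1.le).2 (Set.mem_Ici.2 (hn1 i))
      (Set.mem_Ici.2 (hn2 i)) ha0 hb0 hab
    have habt : a * t₁ + b * t₂ = 0 := by
      rw [ha, hb]
      field_simp
      ring
    have harg : a • (c i + t₁ * k i) + b • (c i + t₂ * k i) = c i := by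
      simp only [smul_eq_mul]
      linear_combination c i * hab + k i * habt
    rw [harg] at hkey
    exact hkey
  have hsum : a * (∑ i, (c i + t₁ * k i) ^ p) + b * (∑ i, (c i + t₂ * k i) ^ p)
      ≤ ∑ i, c i ^ p := by
    rw [Finset.mul_sum, Finset.mul_sum, ← Finset.sum_add_distrib]
    exact Finset.sum_le_sum fun i _ => hcomb i
  set A := ∑ i, (c i + t₁ * k i) ^ p
  set B := ∑ i, (c i + t₂ * k i) ^ p
  have : min A B = a * min A B + b * min A B := by rw [← add_mul, hab, one_mul]
  rw [this]
  calc a * min A B + b * min A B ≤ a * A + b * B := by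
        gcongr <;> [exact min_le_left A B; exact min_le_right A B]
    _ ≤ ∑ i, c i ^ p := hsum

/-- Given a linear relation `∑ k i • v i = 0` with some negative coefficient, a p-convex
representation can be modified so that some coefficient vanishes. -/
lemma reduce {X : Type*} [AddCommGroup X] [Module ℝ X]
    {p : ℝ} (hp0 : 0 < p) (hp1 : p < 1) {m : ℕ} (v : Fin m → X) (k : Fin m → ℝ)
    (hk : (∑ i, k i • v i) = 0) (j₀ : Fin m) (hkj₀ : k j₀ < 0)
    (c : Fin m → ℝ) (hc : ∀ i, 0 ≤ c i) (hcs : (∑ i, c i ^ p) ≤ 1) :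
    ∃ c' : Fin m → ℝ, (∀ i, 0 ≤ c' i) ∧ (∑ i, c' i ^ p) ≤ 1 ∧
      (∑ i, c' i • v i) = (∑ i, c i • v i) ∧ ∃ j, c' j = 0 := by
  classical
  -- the sum is unchanged along direction k
  have hshift : ∀ t : ℝ, (∑ i, (c i + t * k i) • v i) = ∑ i, c i • v i := by
    intro t
    have : (∑ i, (c i + t * k i) • v i) = (∑ i, c i • v i) + t • (∑ i, k i • v i) := by
      rw [Finset.smul_sum, ← Finset.sum_add_distrib]
      apply Finset.sum_congr rfl
      intro i _
      rw [add_smul, smul_smul]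
    rw [this, hk, smul_zero, add_zero]
  -- right endpoint
  set sp : Finset (Fin m) := Finset.univ.filter (fun i => k i < 0) with hsp
  have hspne : sp.Nonempty := ⟨j₀, by simp [hsp, hkj₀]⟩
  obtain ⟨i₀, hi₀mem, hi₀min⟩ := sp.exists_min_image (fun i => c i / (-k i)) hspne
  have hki₀ : k i₀ < 0 := (Finset.mem_filter.1 hi₀mem).2
  set t₂ : ℝ := c i₀ / (-k i₀) with ht₂
  have ht₂0 : 0 ≤ t₂ := div_nonneg (hc i₀) (by linarith)
  have hn2 : ∀ i, 0 ≤ c i + t₂ * k i := by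
    intro i
    rcases lt_or_ge (k i) 0 with h | h
    · have hmem : i ∈ sp := by simp [hsp, h]
      have := hi₀min i hmem
      have h' : t₂ * (-k i) ≤ c i := (le_div_iff₀ (by linarith)).1 this
      nlinarith
    · have := mul_nonneg ht₂0 h
      linarith [hc i]
  have hzero2 : c i₀ + t₂ * k i₀ = 0 := by
    have hne : -k i₀ ≠ 0 := by linarith
    rw [ht₂]; linear_combination -(div_mul_cancel₀ (c i₀) hne)
  by_cases hcase : ∃ i, 0 < k i
  · -- bounded interval on the left as well
    obtain ⟨i₂, hi₂⟩ := hcase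
    set sm : Finset (Fin m) := Finset.univ.filter (fun i => 0 < k i) with hsm
    have hsmne : sm.Nonempty := ⟨i₂, by simp [hsm, hi₂]⟩
    obtain ⟨i₁, hi₁mem, hi₁max⟩ := sm.exists_max_image (fun i => -(c i / k i)) hsmne
    have hki₁ : 0 < k i₁ := (Finset.mem_filter.1 hi₁mem).2
    set t₁ : ℝ := -(c i₁ / k i₁) with ht₁
    have ht₁0 : t₁ ≤ 0 := neg_nonpos.2 (div_nonneg (hc i₁) hki₁.le)
    have hn1 : ∀ i, 0 ≤ c i + t₁ * k i := by
      intro i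
      rcases lt_or_ge 0 (k i) with h | h
      · have hmem : i ∈ sm := by simp [hsm, h]
        have hle := hi₁max i hmem
        have h' : -(c i / k i) * k i ≤ t₁ * k i := by
          exact mul_le_mul_of_nonneg_right hle h.le
        have h'' : -(c i / k i) * k i = -c i := by field_simp
        rw [h''] at h'
        linarith
      · nlinarith [mul_nonneg (neg_nonneg.2 ht₁0) (neg_nonneg.2 h), hc i]
    have hzero1 : c i₁ + t₁ * k i₁ = 0 := by
      have hne : k i₁ ≠ 0 := hki₁.ne'
      rw [ht₁]; linear_combination -(div_mul_cancel₀ (c i₁) hne)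
    rcases lt_or_ge t₁ t₂ with hlt | hge
    · have hmin := min_endpoints_le hp0 hp1 c k hlt ht₁0 ht₂0 hn1 hn2
      have : min (∑ i, (c i + t₁ * k i) ^ p) (∑ i, (c i + t₂ * k i) ^ p) ≤ 1 :=
        le_trans hmin hcs
      rcases min_le_iff.1 this with h | h
      · exact ⟨fun i => c i + t₁ * k i, hn1, h, hshift t₁, ⟨i₁, hzero1⟩⟩
      · exact ⟨fun i => c i + t₂ * k i, hn2, h, hshift t₂, ⟨i₀, hzero2⟩⟩
    · -- t₂ ≤ t₁ ≤ 0 ≤ t₂ forces t₂ = 0, so c i₀ = 0 already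
      have ht₂eq : t₂ = 0 := le_antisymm (by linarith) ht₂0
      have : c i₀ = 0 := by
        have := hzero2
        rw [ht₂eq] at this
        linarith
      exact ⟨c, hc, hcs, rfl, ⟨i₀, this⟩⟩
  · -- all k i ≤ 0 : use a far left point where the sum exceeds 1
    push_neg at hcase
    have hci₀le : c i₀ ≤ 1 := by
      apply le_one_of_rpow_le_one hp0 (hc i₀)
      refine le_trans ?_ hcs
      exact Finset.single_le_sum (fun i _ => Real.rpow_nonneg (hc i) p) (Finset.mem_univ i₀)
    set t₁ : ℝ := (c i₀ - 2) / (-k i₀) with ht₁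
    have ht₁neg : t₁ < 0 := div_neg_of_neg_of_pos (by linarith) (by linarith)
    have hn1 : ∀ i, 0 ≤ c i + t₁ * k i := by
      intro i
      nlinarith [mul_nonneg (neg_nonneg.2 ht₁neg.le) (neg_nonneg.2 (hcase i)), hc i]
    have hval : c i₀ + t₁ * k i₀ = 2 := by
      have hne : -k i₀ ≠ 0 := by linarith
      rw [ht₁]; linear_combination -(div_mul_cancel₀ (c i₀ - 2) hne)
    have hflarge : 1 < ∑ i, (c i + t₁ * k i) ^ p := by
      have h2p : (1:ℝ) < 2 ^ p :=
        (Real.one_lt_rpow_iff_of_pos (by norm_num)).2 (Or.inl ⟨by norm_num, hp0⟩)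
      have : (c i₀ + t₁ * k i₀) ^ p ≤ ∑ i, (c i + t₁ * k i) ^ p :=
        Finset.single_le_sum (fun i _ => Real.rpow_nonneg (hn1 i) p) (Finset.mem_univ i₀)
      rw [hval] at this
      linarith
    have hlt : t₁ < t₂ := lt_of_lt_of_le ht₁neg ht₂0
    have hmin := min_endpoints_le hp0 hp1 c k hlt ht₁neg.le ht₂0 hn1 hn2
    have hminle : min (∑ i, (c i + t₁ * k i) ^ p) (∑ i, (c i + t₂ * k i) ^ p) ≤ 1 :=
      le_trans hmin hcs
    rcases min_le_iff.1 hminle with h | h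
    · linarith
    · exact ⟨fun i => c i + t₂ * k i, hn2, h, hshift t₂, ⟨i₀, hzero2⟩⟩

theorem lemma_four (p : ℝ) (hp0 : 0 < p) (hp1 : p < 1) (n : ℕ)
    (P : Fin n → (Fin n → ℝ)) (hP : LinearIndependent ℝ P) (Q : Fin n → ℝ)
    (M : Fin n → ℝ)
    (hM : M ∈ pConvHull p (Set.range P ∪ {Q} ∪ {0})) :
    ∃ g : Fin n → (Fin n → ℝ),
      (∀ i, g i ∈ Set.range P ∪ {Q}) ∧
      M ∈ pConvHull p (Set.range g ∪ {0}) := by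
  classical
  set v : Fin (n + 1) → (Fin n → ℝ) := Fin.snoc P Q with hv
  have hrange : Set.range v ∪ {0} = Set.range P ∪ {Q} ∪ {0} := by
    have : Set.range v = Set.range P ∪ {Q} := by
      ext x
      constructor
      · rintro ⟨i, rfl⟩
        rcases Fin.eq_castSucc_or_eq_last i with ⟨j, rfl⟩ | rfl
        · exact Or.inl ⟨j, by simp [hv]⟩
        · exact Or.inr (by simp [hv])
      · rintro (⟨i, rfl⟩ | hx)
        · exact ⟨i.castSucc, by simp [hv]⟩
        · rcases hx with rfl
          exact ⟨Fin.last n, by simp [hv]⟩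
    rw [this]
  rw [← hrange] at hM
  obtain ⟨c, hc0, hcs, hce⟩ := repr_of_mem_hull hp0 hp1 v hM
  -- Q is a combination of the P i
  have hspan : Submodule.span ℝ (Set.range P) = ⊤ := by
    apply hP.span_eq_top_of_card_eq_finrank'
    simp [Module.finrank_fin_fun]
  have hQmem : Q ∈ Submodule.span ℝ (Set.range P) := by rw [hspan]; trivial
  obtain ⟨d, hd⟩ := (Submodule.mem_span_range_iff_exists_fun ℝ).1 hQmem
  set k : Fin (n + 1) → ℝ := Fin.snoc d (-1) with hkdef
  have hkrel : (∑ i, k i • v i) = 0 := by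
    rw [Fin.sum_univ_castSucc]
    have h1 : (∑ i : Fin n, k i.castSucc • v i.castSucc) = ∑ i, d i • P i := by
      apply Finset.sum_congr rfl
      intro i _
      simp [hkdef, hv]
    rw [h1, hd]
    simp [hkdef, hv]
  have hklast : k (Fin.last n) < 0 := by simp [hkdef]
  obtain ⟨c', hc'0, hc's, hc'sum, j, hj⟩ :=
    reduce hp0 hp1 v k hkrel (Fin.last n) hklast c hc0 hcs
  have hMrep : M = ∑ i, c' i • v i := by rw [hce, hc'sum]
  rcases Fin.eq_castSucc_or_eq_last j with ⟨j', rfl⟩ | rfl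
  · -- drop P j', keep Q
    refine ⟨fun i => if i = j' then Q else P i, fun i => ?_, ?_⟩
    · by_cases h : i = j'
      · simp [h]
      · exact Or.inl ⟨i, by simp [h]⟩
    · set g : Fin n → (Fin n → ℝ) := fun i => if i = j' then Q else P i with hg
      set lam : Fin n → ℝ := fun i => if i = j' then c' (Fin.last n) else c' i.castSucc
        with hlam
      have hlam0 : ∀ i, 0 ≤ lam i := by
        intro i; rw [hlam]; dsimp only; split <;> exact hc'0 _
      have hsplit : ∀ (f : Fin n → ℝ),
          (∑ i : Fin n, f i) = f j' + ∑ i ∈ Finset.univ.erase j', f i :=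
        fun f => (Finset.add_sum_erase Finset.univ f (Finset.mem_univ j')).symm
      have hsplitV : ∀ (f : Fin n → (Fin n → ℝ)),
          (∑ i : Fin n, f i) = f j' + ∑ i ∈ Finset.univ.erase j', f i :=
        fun f => (Finset.add_sum_erase Finset.univ f (Finset.mem_univ j')).symm
      have hlamsum : (∑ i, lam i ^ p) ≤ 1 := by
        have he1 : (∑ i, lam i ^ p)
            = c' (Fin.last n) ^ p + ∑ i ∈ Finset.univ.erase j', c' i.castSucc ^ p := by
          rw [hsplit (fun i => lam i ^ p)]
          congr 1
          · rw [hlam]; simp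
          · apply Finset.sum_congr rfl
            intro i hi
            rw [hlam]
            simp [Finset.ne_of_mem_erase hi]
        have he2 : (∑ i : Fin (n+1), c' i ^ p)
            = c' (Fin.last n) ^ p + ∑ i ∈ Finset.univ.erase j', c' i.castSucc ^ p := by
          rw [Fin.sum_univ_castSucc, hsplit (fun i => c' i.castSucc ^ p), hj,
            Real.zero_rpow hp0.ne']
          ring
        rw [he1, ← he2]
        exact hc's
      have hMg : M = ∑ i, lam i • g i := by
        rw [hMrep, Fin.sum_univ_castSucc, hsplitV (fun i => c' i.castSucc • v i.castSucc),
          hsplitV (fun i => lam i • g i), hj, zero_smul, zero_add]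
        have hgj : lam j' • g j' = c' (Fin.last n) • v (Fin.last n) := by
          simp [hlam, hg, hv]
        have herase : ∀ i ∈ Finset.univ.erase j',
            lam i • g i = c' i.castSucc • v i.castSucc := by
          intro i hi
          have hne : i ≠ j' := Finset.ne_of_mem_erase hi
          simp [hlam, hg, hne, hv]
        rw [hgj, Finset.sum_congr rfl herase]
        exact add_comm _ _
      intro S hS
      obtain ⟨hSconv, hSsub⟩ := hS
      rw [hMg]
      exact sum_mem_of_pconvex hp0 hp1 hSconv (hSsub (Or.inr rfl)) n g
        (fun i => hSsub (Or.inl ⟨i, rfl⟩)) lam hlam0 hlamsum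
  · -- drop Q, keep all P
    refine ⟨P, fun i => Or.inl ⟨i, rfl⟩, ?_⟩
    set lam : Fin n → ℝ := fun i => c' i.castSucc with hlam
    have hlamsum : (∑ i, lam i ^ p) ≤ 1 := by
      have : (∑ i : Fin (n+1), c' i ^ p) = (∑ i, lam i ^ p) + c' (Fin.last n) ^ p := by
        rw [Fin.sum_univ_castSucc]
      rw [this, hj, Real.zero_rpow hp0.ne', add_zero] at hc's
      exact hc's
    have hMg : M = ∑ i, lam i • P i := by
      rw [hMrep, Fin.sum_univ_castSucc, hj, zero_smul, add_zero]
      apply Finset.sum_congr rfl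
      intro i _
      simp [hlam, hv]
    intro S hS
    obtain ⟨hSconv, hSsub⟩ := hS
    rw [hMg]
    exact sum_mem_of_pconvex hp0 hp1 hSconv (hSsub (Or.inr rfl)) n P
      (fun i => hSsub (Or.inl ⟨i, rfl⟩)) lam (fun i => hc'0 _) hlamsum
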